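/- HTD-DAG is the minimal correction from above: ȳ produced by HTD-DAG is the (pointwise) largest vector z : V → [0,1] such that z ≤ ŷ pointwise and z satisfies the true path rule (i ∈ par(j) → z_i ≥ z_j). -/
import Mathlib


/-- HTD-DAG is the minimal correction from above: the output
`ȳ i = min_{j ∈ anc(i) ∪ {i}} ŷ j` is the pointwise largest vector
`z : V → [0,1]` such that `z ≤ ŷ` pointwise and `z` satisfies the true path
rule (`i ∈ par(j) → z i ≥ z j`). -/
theorem HTD_DAG_is_largest_minorant
    {V : Type*} [Fintype V] (E : V → V → Prop) (r : V)
    (hacyclic : ∀ v, ¬ Relation.TransGen E v v)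
    (hreach : ∀ v, Relation.ReflTransGen E r v)
    (yhat : V → ℝ) (hy : ∀ i, yhat i ∈ Set.Icc (0:ℝ) 1)
    (ybar : V → ℝ)
    (hbar : ∀ i, ybar i = sInf (yhat '' {j | Relation.ReflTransGen E j i})) :
    (∀ i, ybar i ∈ Set.Icc (0:ℝ) 1) ∧
    (∀ i, ybar i ≤ yhat i) ∧
    (∀ i j, E i j → ybar i ≥ ybar j) ∧
    (∀ z : V → ℝ, (∀ i, z i ∈ Set.Icc (0:ℝ) 1) → (∀ i, z i ≤ yhat i) →
      (∀ i j, E i j → z i ≥ z j) → ∀ i, z i ≤ ybar i) := by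
  have hbdd : ∀ i : V, BddBelow (yhat '' {j | Relation.ReflTransGen E j i}) := by
    intro i
    exact ⟨0, by rintro x ⟨j, _, rfl⟩; exact (hy j).1⟩
  have hne : ∀ i : V, (yhat '' {j | Relation.ReflTransGen E j i}).Nonempty :=
    fun i => ⟨yhat i, i, Relation.ReflTransGen.refl, rfl⟩
  have hle : ∀ i, ybar i ≤ yhat i := by
    intro i
    rw [hbar i]
    exact csInf_le (hbdd i) ⟨i, Relation.ReflTransGen.refl, rfl⟩
  refine ⟨?_, hle, ?_, ?_⟩
  · intro i
    constructor
    · rw [hbar i]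
      exact le_csInf (hne i) (by rintro x ⟨j, _, rfl⟩; exact (hy j).1)
    · exact (hle i).trans (hy i).2
  · intro i j hij
    rw [hbar i, hbar j]
    refine csInf_le_csInf (hbdd j) (hne i) ?_
    rintro x ⟨k, hk, rfl⟩
    exact ⟨k, hk.trans (Relation.ReflTransGen.single hij), rfl⟩
  · intro z hz hzle htp i
    rw [hbar i]
    refine le_csInf (hne i) ?_
    rintro x ⟨j, hj, rfl⟩
    have : z i ≤ z j := by
      induction hj with
      | refl => exact le_rfl
      | tail hstep hlast ih => exact (htp _ _ hlast).trans ih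
    exact this.trans (hzle j)
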